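/- Let r ≥ 1 be an integer, set m = 4r+2, and for each integer 0 ≤ p ≤ r let s^{(p)} ∈ ℤ^m be the tuple whose first m−2p coordinates are 1,11,1,11,…,1,11 (alternating) and whose last 2p coordinates are 21,31,…,21,31 (alternating). Then for all 0 ≤ p < p' ≤ r there exist no integer ℓ coprime to 40, no permutation σ of {1,…,m}, and no signs ε_1,…,ε_m ∈ {±1} such that ℓ·ε_j·s^{(p)}_j ≡ s^{(p')}_{σ(j)} (mod 40) for every j. -/

import Mathlib

/-- The parameter tuple `s^{(p)} ∈ ℤ^m`, `m = 4r+2`: its first `m - 2p` coordinates are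
`1,11,1,11,…,1,11` (alternating) and its last `2p` coordinates are `21,31,…,21,31`
(alternating); coordinates are indexed from `0`, so even positions get `1` (resp. `21`)
and odd positions get `11` (resp. `31`). -/
def sFam (r p : ℕ) : Fin (4 * r + 2) → ℤ :=
  fun j =>
    if (j : ℕ) < 4 * r + 2 - 2 * p then (if (j : ℕ) % 2 = 0 then 1 else 11)
    else (if (j : ℕ) % 2 = 0 then 21 else 31)

lemma sFam_zval (r q : ℕ) (j : Fin (4 * r + 2)) :
    ((sFam r q j : ℤ) : ZMod 40) =
      if (j : ℕ) < 4 * r + 2 - 2 * q then (if (j : ℕ) % 2 = 0 then 1 else 11)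
      else (if (j : ℕ) % 2 = 0 then 21 else 31) := by
  unfold sFam
  split_ifs <;> norm_num

lemma sFam_sum_ne (r q : ℕ) (j k : Fin (4 * r + 2)) :
    ((sFam r q j : ℤ) : ZMod 40) + ((sFam r q k : ℤ) : ZMod 40) ≠ 0 := by
  rw [sFam_zval, sFam_zval]
  split_ifs <;> decide

lemma sFam_count_le (r q : ℕ) (hq : q ≤ r) (c : ZMod 40) :
    (Finset.univ.filter fun j : Fin (4 * r + 2) =>
      ((sFam r q j : ℤ) : ZMod 40) = c).card ≤ 2 * r + 1 - q := by
  set A := Finset.univ.filter fun j : Fin (4 * r + 2) =>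
      ((sFam r q j : ℤ) : ZMod 40) = c with hA
  rcases A.eq_empty_or_nonempty with h | ⟨j₀, hj₀⟩
  · simp [h]
  have hj₀' : ((sFam r q j₀ : ℤ) : ZMod 40) = c := (Finset.mem_filter.mp hj₀).2
  have hclass : ∀ j ∈ A, ((j : ℕ) < 4 * r + 2 - 2 * q ↔ (j₀ : ℕ) < 4 * r + 2 - 2 * q)
      ∧ (j : ℕ) % 2 = (j₀ : ℕ) % 2 := by
    intro j hj
    have hthis : ((sFam r q j : ℤ) : ZMod 40) = ((sFam r q j₀ : ℤ) : ZMod 40) := by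
      rw [(Finset.mem_filter.mp hj).2, hj₀']
    rw [sFam_zval, sFam_zval] at hthis
    split_ifs at hthis <;>
      first
        | (exact ⟨by omega, by omega⟩)
        | (exact absurd hthis (by decide))
  by_cases hcut : (j₀ : ℕ) < 4 * r + 2 - 2 * q
  · have : A.card ≤ (Finset.range (2 * r + 1 - q)).card := by
      refine Finset.card_le_card_of_injOn (fun j : Fin (4 * r + 2) => (j : ℕ) / 2) ?_ ?_
      · intro j hj
        have h1 := hclass j hj
        have h2 : (j : ℕ) < 4 * r + 2 - 2 * q := h1.1.mpr hcut
        simp only [Finset.mem_coe, Finset.mem_range]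
        omega
      · intro j hj k hk hjk
        have h1 := (hclass j hj).2
        have h2 := (hclass k hk).2
        simp only at hjk
        exact Fin.ext (by omega)
    simpa using this
  · have hcard : A.card ≤ (Finset.Ico (2 * r + 1 - q) (2 * r + 1)).card := by
      refine Finset.card_le_card_of_injOn (fun j : Fin (4 * r + 2) => (j : ℕ) / 2) ?_ ?_
      · intro j hj
        have h1 := hclass j hj
        have h2 : ¬ (j : ℕ) < 4 * r + 2 - 2 * q := fun h => hcut (h1.1.mp h)
        have h3 : (j : ℕ) < 4 * r + 2 := j.isLt
        simp only [Finset.mem_coe, Finset.mem_Ico]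
        omega
      · intro j hj k hk hjk
        have h1 := (hclass j hj).2
        have h2 := (hclass k hk).2
        simp only at hjk
        exact Fin.ext (by omega)
    rw [Nat.card_Ico] at hcard
    omega

lemma sFam_count_ge (r q : ℕ) (hq : q ≤ r) :
    2 * r + 1 - q ≤ (Finset.univ.filter fun j : Fin (4 * r + 2) =>
      ((sFam r q j : ℤ) : ZMod 40) = 1).card := by
  have hmod : ∀ i : ℕ, i < 2 * r + 1 - q → 2 * i % (4 * r + 2) = 2 * i := by
    intro i hi
    exact Nat.mod_eq_of_lt (by omega)
  have := Finset.card_le_card_of_injOn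
    (f := fun i : ℕ => (⟨2 * i % (4 * r + 2), Nat.mod_lt _ (by omega)⟩ : Fin (4 * r + 2)))
    (s := Finset.range (2 * r + 1 - q))
    (t := Finset.univ.filter fun j : Fin (4 * r + 2) =>
      ((sFam r q j : ℤ) : ZMod 40) = 1)
    ?_ ?_
  · simpa using this
  · intro i hi
    simp only [Finset.mem_coe, Finset.mem_range] at hi
    simp only [Finset.mem_coe, Finset.mem_filter, Finset.mem_univ, true_and]
    rw [sFam_zval]
    simp only [Fin.val_mk, hmod i hi]
    rw [if_pos (by omega), if_pos (by omega)]
  · intro i hi k hk hik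
    simp only [Finset.coe_range, Set.mem_Iio] at hi hk
    have h' := congrArg Fin.val hik
    simp only [Fin.val_mk, hmod i hi, hmod k hk] at h'
    omega

theorem sFam_not_isometric (r : ℕ) (hr : 1 ≤ r) (p p' : ℕ) (hpp' : p < p')
    (hp' : p' ≤ r) :
    ¬ ∃ (ℓ : ℤ) (σ : Equiv.Perm (Fin (4 * r + 2))) (ε : Fin (4 * r + 2) → ℤ),
        IsCoprime ℓ (40 : ℤ) ∧ (∀ j, ε j = 1 ∨ ε j = -1) ∧
        ∀ j, (40 : ℤ) ∣ ℓ * ε j * sFam r p j - sFam r p' (σ j) := by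
  rintro ⟨ℓ, σ, ε, hcop, hε, hdvd⟩
  set c : ZMod 40 := ((ℓ : ℤ) : ZMod 40) with hc
  have heq : ∀ j, ((ℓ : ℤ) : ZMod 40) * ((ε j : ℤ) : ZMod 40) * ((sFam r p j : ℤ) : ZMod 40)
      = ((sFam r p' (σ j) : ℤ) : ZMod 40) := by
    intro j
    have h := (ZMod.intCast_zmod_eq_zero_iff_dvd _ 40).mpr (hdvd j)
    push_cast at h
    rw [sub_eq_zero] at h
    exact h
  have key : ∀ j, ((sFam r p j : ℤ) : ZMod 40) = 1 →
      ((sFam r p' (σ j) : ℤ) : ZMod 40) = c ∨ ((sFam r p' (σ j) : ℤ) : ZMod 40) = -c := by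
    intro j hj
    rcases hε j with h1 | h1
    · left; rw [← heq j, hj, h1]; push_cast; ring
    · right; rw [← heq j, hj, h1]; push_cast; ring
  set G : Fin (4 * r + 2) → ZMod 40 := fun j => ((sFam r p' j : ℤ) : ZMod 40) with hG
  set A := Finset.univ.filter fun j : Fin (4 * r + 2) =>
      ((sFam r p j : ℤ) : ZMod 40) = 1 with hAdef
  set B := Finset.univ.filter fun j : Fin (4 * r + 2) => G (σ j) = c ∨ G (σ j) = -c with hBdef
  set B' := Finset.univ.filter fun j : Fin (4 * r + 2) => G j = c ∨ G j = -c with hB'def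
  have hAB : A ⊆ B := by
    intro j hj
    simp only [hAdef, Finset.mem_filter, Finset.mem_univ, true_and] at hj
    simp only [hBdef, Finset.mem_filter, Finset.mem_univ, true_and]
    exact key j hj
  have hBB' : B.card = B'.card := by
    apply Finset.card_bij' (fun j _ => σ j) (fun j _ => σ.symm j)
    · intro j hj
      simp only [hBdef, Finset.mem_filter, Finset.mem_univ, true_and] at hj
      simp only [hB'def, Finset.mem_filter, Finset.mem_univ, true_and]
      exact hj
    · intro j hj
      simp only [hB'def, Finset.mem_filter, Finset.mem_univ, true_and] at hj
      simp only [hBdef, Finset.mem_filter, Finset.mem_univ, true_and]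
      simpa using hj
    · intro j _; simp
    · intro j _; simp
  have hsplit : B' ⊆ (Finset.univ.filter fun j => G j = c) ∪
      (Finset.univ.filter fun j => G j = -c) := by
    intro j hj
    simp only [hB'def, Finset.mem_filter, Finset.mem_univ, true_and] at hj
    simp only [Finset.mem_union, Finset.mem_filter, Finset.mem_univ, true_and]
    exact hj
  have hone : (Finset.univ.filter fun j : Fin (4 * r + 2) => G j = c).card = 0 ∨
      (Finset.univ.filter fun j : Fin (4 * r + 2) => G j = -c).card = 0 := by
    by_contra hcon
    push_neg at hcon
    obtain ⟨h1, h2⟩ := hcon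
    obtain ⟨j, hj⟩ := Finset.card_ne_zero.mp h1
    obtain ⟨k, hk⟩ := Finset.card_ne_zero.mp h2
    simp only [Finset.mem_filter, Finset.mem_univ, true_and] at hj hk
    apply sFam_sum_ne r p' j k
    show G j + G k = 0
    rw [hj, hk]; ring
  have hle1 : (Finset.univ.filter fun j : Fin (4 * r + 2) => G j = c).card ≤ 2 * r + 1 - p' :=
    sFam_count_le r p' hp' c
  have hle2 : (Finset.univ.filter fun j : Fin (4 * r + 2) => G j = -c).card ≤ 2 * r + 1 - p' :=
    sFam_count_le r p' hp' (-c)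
  have hge : 2 * r + 1 - p ≤ A.card := sFam_count_ge r p (le_trans (le_of_lt hpp') hp')
  have hchain : A.card ≤ 2 * r + 1 - p' := by
    calc A.card ≤ B.card := Finset.card_le_card hAB
      _ = B'.card := hBB'
      _ ≤ ((Finset.univ.filter fun j => G j = c) ∪
            (Finset.univ.filter fun j => G j = -c)).card := Finset.card_le_card hsplit
      _ ≤ (Finset.univ.filter fun j : Fin (4 * r + 2) => G j = c).card +
            (Finset.univ.filter fun j : Fin (4 * r + 2) => G j = -c).card :=
          Finset.card_union_le _ _
      _ ≤ 2 * r + 1 - p' := by omega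
  omega
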